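/- Let λ < 0, A = 2λ, s₀ = 1/(512λ³), p₀ = −1/(8λ), q₀ = 11/(16λ²). On the face {(s,q,p) : As = p², s₀ ≤ s ≤ 0, 0 ≤ q ≤ q₀, 0 ≤ p ≤ p₀} of the region P, the quantity A·W₁ − 2p·W₃ is nonnegative, where W(s,q,p) = (−s(λs−p²), s(p−λq)+qp², s(λp+1−λ²q)+p³). Explicitly, if As = p² then A·W₁ − 2p·W₃ = −(p³/A)·[p(A+3λ) + 2(1−λ²q)] ≥ 0. -/

import Mathlib

/-- on the face As = p² of P, the derivative A·W₁ − 2p·W₃ of As − p²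
along W equals −(p³/A)[p(A+3λ) + 2(1−λ²q)] and is nonnegative. -/
theorem stmt14 (l : ℝ) (hl : l < 0) (s q p : ℝ)
    (hface : 2 * l * s = p ^ 2)
    (hs1 : 1 / (512 * l ^ 3) ≤ s) (hs2 : s ≤ 0)
    (hq1 : 0 ≤ q) (hq2 : q ≤ 11 / (16 * l ^ 2))
    (hp1 : 0 ≤ p) (hp2 : p ≤ -1 / (8 * l)) :
    (2 * l) * (-s * (l * s - p ^ 2))
        - 2 * p * (s * (l * p + 1 - l ^ 2 * q) + p ^ 3)
      = -(p ^ 3 / (2 * l)) * (p * (2 * l + 3 * l) + 2 * (1 - l ^ 2 * q)) ∧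
    0 ≤ (2 * l) * (-s * (l * s - p ^ 2))
        - 2 * p * (s * (l * p + 1 - l ^ 2 * q) + p ^ 3) := by
  have hl0 : (2 : ℝ) * l ≠ 0 := by nlinarith
  have hs : s = p ^ 2 / (2 * l) := by rw [eq_div_iff hl0]; linarith [hface]
  have heq : (2 * l) * (-s * (l * s - p ^ 2))
        - 2 * p * (s * (l * p + 1 - l ^ 2 * q) + p ^ 3)
      = -(p ^ 3 / (2 * l)) * (p * (2 * l + 3 * l) + 2 * (1 - l ^ 2 * q)) := by
    subst hs; have : l ≠ 0 := ne_of_lt hl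
    field_simp; ring
  refine ⟨heq, ?_⟩
  rw [heq]
  have hlne : l ≠ 0 := ne_of_lt hl
  have hl2 : 0 < l ^ 2 := by positivity
  have h2 : 0 ≤ p * (2 * l + 3 * l) + 2 * (1 - l ^ 2 * q) := by
    have hp5 : p * (5 * l) ≥ (-1 / (8 * l)) * (5 * l) := by
      have : 5 * l < 0 := by linarith
      nlinarith
    have hq' : l ^ 2 * q ≤ 11 / 16 := by
      have := mul_le_mul_of_nonneg_left hq2 (le_of_lt hl2)
      calc l ^ 2 * q ≤ l ^ 2 * (11 / (16 * l ^ 2)) := this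
        _ = 11 / 16 := by field_simp
    have : (-1 / (8 * l)) * (5 * l) = -5/8 := by field_simp
    nlinarith
  have h1 : 0 ≤ -(p ^ 3 / (2 * l)) := by
    have : p ^ 3 / (2 * l) ≤ 0 :=
      div_nonpos_of_nonneg_of_nonpos (by positivity) (by linarith)
    linarith
  exact mul_nonneg h1 h2
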